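/- For every real s ≥ 1 and every integer N ≥ 2, one has α_{N,s} ≤ α_{N+1,s}; that is, the sequence N ↦ α_{N,s} is nondecreasing in N. -/

import Mathlib

open MeasureTheory

noncomputable section

/-- `α_{N,s}`: the infimum over `N`-tuples of pairwise distinct points of `ℝ³` of the
quotient `(∑_{j<k} (‖x_j‖^s + ‖x_k‖^s)/‖x_j - x_k‖) / ((N-1) ∑_k ‖x_k‖^(s-1))`. -/
noncomputable def alphaNS (N : ℕ) (s : ℝ) : ℝ :=
  sInf { c : ℝ | ∃ x : Fin N → EuclideanSpace ℝ (Fin 3), Function.Injective x ∧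
    c = (∑ j : Fin N, ∑ k : Fin N,
          if j < k then (‖x j‖ ^ s + ‖x k‖ ^ s) / ‖x j - x k‖ else 0) /
        (((N : ℝ) - 1) * ∑ k : Fin N, ‖x k‖ ^ (s - 1)) }

lemma aux_sum_rpow_pos {M : ℕ} (hM : 2 ≤ M) (t : ℝ)
    (x : Fin M → EuclideanSpace ℝ (Fin 3)) (hx : Function.Injective x) :
    0 < ∑ k, ‖x k‖ ^ t := by
  have h2 : (⟨0, by omega⟩ : Fin M) ≠ ⟨1, by omega⟩ := by
    intro h; simpa using congrArg Fin.val h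
  have hne : x ⟨0, by omega⟩ ≠ x ⟨1, by omega⟩ := fun h => h2 (hx h)
  have hex : ∃ k, x k ≠ 0 := by
    by_contra h
    push_neg at h
    exact hne ((h _).trans (h _).symm)
  obtain ⟨k, hk⟩ := hex
  refine Finset.sum_pos' (fun i _ => Real.rpow_nonneg (norm_nonneg _) t) ⟨k, Finset.mem_univ k, ?_⟩
  exact Real.rpow_pos_of_pos (norm_pos_iff.mpr hk) t

lemma aux_bddBelow (N : ℕ) (hN : 1 ≤ N) (s : ℝ) :
    BddBelow { c : ℝ | ∃ x : Fin N → EuclideanSpace ℝ (Fin 3), Function.Injective x ∧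
      c = (∑ j : Fin N, ∑ k : Fin N,
            if j < k then (‖x j‖ ^ s + ‖x k‖ ^ s) / ‖x j - x k‖ else 0) /
          (((N : ℝ) - 1) * ∑ k : Fin N, ‖x k‖ ^ (s - 1)) } := by
  refine ⟨0, fun c hc => ?_⟩
  obtain ⟨x, hx, rfl⟩ := hc
  apply div_nonneg
  · refine Finset.sum_nonneg fun j _ => Finset.sum_nonneg fun k _ => ?_
    split
    · exact div_nonneg (add_nonneg (Real.rpow_nonneg (norm_nonneg _) _)
        (Real.rpow_nonneg (norm_nonneg _) _)) (norm_nonneg _)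
    · exact le_rfl
  · refine mul_nonneg (by exact_mod_cast sub_nonneg.mpr (by exact_mod_cast hN : (1:ℝ) ≤ N)) ?_
    exact Finset.sum_nonneg fun k _ => Real.rpow_nonneg (norm_nonneg _) _

/-- For every real `s ≥ 1` and every integer `N ≥ 2`, `α_{N,s} ≤ α_{N+1,s}`. -/
theorem alphaNS_mono (s : ℝ) (hs : 1 ≤ s) (N : ℕ) (hN : 2 ≤ N) :
    alphaNS N s ≤ alphaNS (N + 1) s := by
  rw [alphaNS]
  apply le_csInf
  · -- nonemptiness of the set for N+1
    refine ⟨_, fun k : Fin (N+1) => ((k : ℕ) : ℝ) • EuclideanSpace.single (0 : Fin 3) (1:ℝ),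
      ?_, rfl⟩
    intro j k h
    simp only at h
    have hv : (EuclideanSpace.single (0 : Fin 3) (1:ℝ)) ≠ 0 := by
      intro h0
      have := congrArg (fun v : EuclideanSpace ℝ (Fin 3) => v 0) h0
      simp [EuclideanSpace.single] at this
    have : (((j : ℕ) : ℝ) - ((k : ℕ) : ℝ)) • EuclideanSpace.single (0 : Fin 3) (1:ℝ) = 0 := by
      rw [sub_smul, h, sub_self]
    rcases smul_eq_zero.mp this with h1 | h1
    · have : ((j : ℕ) : ℝ) = ((k : ℕ) : ℝ) := by linarith [sub_eq_zero.mp h1]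
      exact Fin.ext (Nat.cast_injective this)
    · exact absurd h1 hv
  · rintro c ⟨x, hx, rfl⟩
    set F : Fin (N+1) → Fin (N+1) → ℝ :=
      fun a b => if a < b then (‖x a‖ ^ s + ‖x b‖ ^ s) / ‖x a - x b‖ else 0 with hF
    have hF0 : ∀ a, F a a = 0 := fun a => by simp [hF]
    set D : ℝ := ∑ k, ‖x k‖ ^ (s-1) with hDdef
    have hD : 0 < D := aux_sum_rpow_pos (by omega) _ x hx
    set Num : ℝ := ∑ a, ∑ b, F a b with hNumdef
    -- per-index quantities
    have key : ∀ i : Fin (N+1),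
        alphaNS N s * (((N : ℝ) - 1) * (D - ‖x i‖ ^ (s-1))) ≤
          ∑ j : Fin N, ∑ k : Fin N, F (i.succAbove j) (i.succAbove k) := by
      intro i
      set y : Fin N → EuclideanSpace ℝ (Fin 3) := x ∘ i.succAbove with hy
      have hyi : Function.Injective y := hx.comp Fin.succAbove_right_injective
      have hDi : (D - ‖x i‖ ^ (s-1)) = ∑ k : Fin N, ‖y k‖ ^ (s-1) := by
        have := Fin.sum_univ_succAbove (fun k => ‖x k‖ ^ (s-1)) i
        rw [hDdef, this]; simp [hy]
      have hDipos : 0 < ∑ k : Fin N, ‖y k‖ ^ (s-1) := aux_sum_rpow_pos hN _ y hyi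
      have hmem : (∑ j : Fin N, ∑ k : Fin N, F (i.succAbove j) (i.succAbove k)) /
          (((N : ℝ) - 1) * ∑ k : Fin N, ‖y k‖ ^ (s-1)) ∈
          { c : ℝ | ∃ x : Fin N → EuclideanSpace ℝ (Fin 3), Function.Injective x ∧
            c = (∑ j : Fin N, ∑ k : Fin N,
                  if j < k then (‖x j‖ ^ s + ‖x k‖ ^ s) / ‖x j - x k‖ else 0) /
                (((N : ℝ) - 1) * ∑ k : Fin N, ‖x k‖ ^ (s - 1)) } := by
        refine ⟨y, hyi, ?_⟩
        congr 1
        refine Finset.sum_congr rfl fun j _ => Finset.sum_congr rfl fun k _ => ?_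
        simp only [hF, hy, Function.comp_apply, Fin.succAbove_lt_succAbove_iff]
      have hle : alphaNS N s ≤ (∑ j : Fin N, ∑ k : Fin N, F (i.succAbove j) (i.succAbove k)) /
          (((N : ℝ) - 1) * ∑ k : Fin N, ‖y k‖ ^ (s-1)) :=
        csInf_le (aux_bddBelow N (by omega) s) hmem
      have hpos : 0 < ((N : ℝ) - 1) * ∑ k : Fin N, ‖y k‖ ^ (s-1) := by
        apply mul_pos _ hDipos
        have : (2:ℝ) ≤ (N:ℝ) := by exact_mod_cast hN
        linarith
      rw [hDi]
      exact (le_div_iff₀ hpos).mp hle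
    -- sum the per-index inequalities
    have hsum := Finset.sum_le_sum (fun i (_ : i ∈ Finset.univ) => key i)
    -- LHS of hsum
    have hL : ∑ i : Fin (N+1), alphaNS N s * (((N : ℝ) - 1) * (D - ‖x i‖ ^ (s-1))) =
        ((N : ℝ) - 1) * (alphaNS N s * ((N : ℝ) * D)) := by
      rw [← Finset.mul_sum, ← Finset.mul_sum, Finset.sum_sub_distrib, Finset.sum_const,
        Finset.card_univ, Fintype.card_fin, ← hDdef]
      push_cast
      ring
    -- RHS of hsum : double counting
    have hNumi : ∀ i : Fin (N+1), ∑ j : Fin N, ∑ k : Fin N, F (i.succAbove j) (i.succAbove k) =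
        ∑ a, ∑ b, (if a = i ∨ b = i then 0 else F a b) := by
      intro i
      rw [Fin.sum_univ_succAbove (fun a => ∑ b, (if a = i ∨ b = i then 0 else F a b)) i]
      simp only [true_or, if_true, Finset.sum_const_zero, zero_add]
      refine Finset.sum_congr rfl fun j _ => ?_
      rw [Fin.sum_univ_succAbove (fun b => (if i.succAbove j = i ∨ b = i then 0 else F (i.succAbove j) b)) i]
      have hne : ∀ k : Fin N, i.succAbove k ≠ i := fun k => Fin.succAbove_ne i k
      simp [hne]
    have hR : ∑ i : Fin (N+1), ∑ a, ∑ b, (if a = i ∨ b = i then (0:ℝ) else F a b) =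
        ((N : ℝ) - 1) * Num := by
      rw [Finset.sum_comm]
      rw [show ((N : ℝ) - 1) * Num = ∑ a, ((N:ℝ)-1) * ∑ b, F a b by
        rw [hNumdef, Finset.mul_sum]]
      refine Finset.sum_congr rfl fun a _ => ?_
      rw [Finset.sum_comm, Finset.mul_sum]
      refine Finset.sum_congr rfl fun b _ => ?_
      by_cases hab : a = b
      · subst hab
        simp [hF0 a]
      · have step : ∀ i : Fin (N+1), (if a = i ∨ b = i then (0:ℝ) else F a b) =
            F a b - (if i ∈ ({a, b} : Finset (Fin (N+1))) then F a b else 0) := by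
          intro i
          by_cases h : a = i ∨ b = i
          · have : i ∈ ({a, b} : Finset (Fin (N+1))) := by
              rcases h with h | h <;> simp [h.symm]
            simp [h, this]
          · have : i ∉ ({a, b} : Finset (Fin (N+1))) := by
              simp only [Finset.mem_insert, Finset.mem_singleton]
              push_neg at h ⊢
              exact ⟨fun hh => h.1 hh.symm, fun hh => h.2 hh.symm⟩
            simp [h, this]
        rw [Finset.sum_congr rfl (fun i _ => step i), Finset.sum_sub_distrib,
          Finset.sum_const, Finset.card_univ, Fintype.card_fin, Finset.sum_ite_mem,
          Finset.univ_inter, Finset.sum_const, Finset.card_pair hab]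
        push_cast
        ring
    rw [hL] at hsum
    rw [Finset.sum_congr rfl (fun i _ => hNumi i), hR] at hsum
    -- divide by N-1 and conclude
    have hN1 : (0:ℝ) < (N:ℝ) - 1 := by
      have : (2:ℝ) ≤ (N:ℝ) := by exact_mod_cast hN
      linarith
    have h2 : alphaNS N s * ((N : ℝ) * D) ≤ Num := le_of_mul_le_mul_left hsum hN1
    have hposd : (0:ℝ) < (((N+1 : ℕ) : ℝ) - 1) * D := by
      push_cast
      have hNp : (0:ℝ) < (N:ℝ) := by positivity
      nlinarith
    rw [le_div_iff₀ hposd]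
    calc alphaNS N s * ((((N+1:ℕ) : ℝ) - 1) * D) = alphaNS N s * ((N:ℝ) * D) := by push_cast; ring
      _ ≤ Num := h2
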